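/- Let N be a left near-ring. Then N admits a multiplicative derivation only if N is zero symmetric, i.e., if d : N → N satisfies d(xy) = x·d(y) + d(x)·y for all x, y ∈ N, then 0·x = 0 for all x ∈ N. -/
import Mathlib


class LeftNearRing (N : Type*) extends AddGroup N, Mul N where
  mul_assoc : ∀ a b c : N, a * b * c = a * (b * c)
  left_distrib : ∀ a b c : N, a * (b + c) = a * b + a * c

theorem stmt0 {N : Type*} [LeftNearRing N] (d : N → N)
    (hd : ∀ x y : N, d (x * y) = x * d y + d x * y) :
    ∀ x : N, 0 * x = 0 := by
  have mz : ∀ a : N, a * 0 = 0 := by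
    intro a
    have h : a * 0 + a * 0 = a * 0 + 0 := by
      rw [← LeftNearRing.left_distrib, add_zero, add_zero]
    exact add_left_cancel h
  intro x
  set b : N := 0 * x with hb
  -- b is left-absorbing
  have habs : ∀ y : N, y * b = b := by
    intro y
    rw [hb, ← LeftNearRing.mul_assoc, mz, ← hb]
  -- key identity: d b = y * d b + b for all y
  have h1 : ∀ y : N, d b = y * d b + b := by
    intro y
    have := hd y b
    rw [habs y, habs (d y)] at this
    exact this
  -- m := 0 * d b is left-absorbing
  set m : N := 0 * d b with hm
  have hmabs : ∀ y : N, y * m = m := by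
    intro y
    rw [hm, ← LeftNearRing.mul_assoc, mz]
  have hdb : d b = m + b := h1 0
  -- hence d b is left-absorbing
  have h2 : ∀ y : N, y * d b = d b := by
    intro y
    rw [hdb, LeftNearRing.left_distrib, hmabs, habs]
  -- combine
  have h3 : d b = d b + b := by
    have := h1 0
    rw [h2 0] at this
    exact this
  have : d b + b = d b + 0 := by rw [add_zero]; exact h3.symm
  exact (add_left_cancel this)
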